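/- Let B = ⊕_{k≥1} B_k where each B_k is a direct sum of cyclic groups of order p^k, let π_k : B → B_k be the projections, and let H be a characteristic subgroup of B with π_k(H) = p^{n_k}B_k for each k with π_k(H) ≠ 0. Then n_k ≤ n_{k+r} ≤ n_k + r for all k, r ≥ 1. -/

import Mathlib

/-- Multiplication by an integer as an additive group homomorphism. -/
def zsmulHom {A : Type*} [AddCommGroup A] (n : ℤ) : A →+ A where
  toFun x := n • x
  map_zero' := smul_zero n
  map_add' x y := smul_add n x y

lemma aux_pow_eq_zero_iff (p m a : ℕ) (hp : p.Prime) :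
    (p : ZMod (p ^ m)) ^ a = 0 ↔ m ≤ a := by
  haveI : NeZero (p ^ m) := ⟨pow_ne_zero m hp.pos.ne'⟩
  rw [← Nat.cast_pow, ZMod.natCast_eq_zero_iff,
    Nat.pow_dvd_pow_iff_le_right hp.one_lt]

lemma aux_le_of_eq (p m a b : ℕ) (hp : p.Prime) (c : ZMod (p ^ m)) (ha : a < m)
    (h : (p : ZMod (p ^ m)) ^ a = (p : ZMod (p ^ m)) ^ b * c) : b ≤ a := by
  by_contra hba
  push_neg at hba
  rcases le_or_gt b m with hbm | hmb
  · have h2 := congrArg (· * (p : ZMod (p ^ m)) ^ (m - b)) h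
    simp only [mul_comm, mul_assoc, ← pow_add] at h2
    have e1 : b + (m - b) = m := by omega
    rw [e1, (aux_pow_eq_zero_iff p m m hp).2 le_rfl, mul_zero] at h2
    exact absurd h2 (by
      intro hz
      exact absurd ((aux_pow_eq_zero_iff p m _ hp).1 hz) (by omega))
  · rw [(aux_pow_eq_zero_iff p m b hp).2 hmb.le, zero_mul] at h
    exact absurd ((aux_pow_eq_zero_iff p m a hp).1 h) (by omega)

/-- 1 + g as an AddEquiv when g∘g = 0. -/
def nilpEquiv {G : Type*} [AddCommGroup G] (g : G →+ G) (hg : ∀ x, g (g x) = 0) : G ≃+ G where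
  toFun x := x + g x
  invFun x := x - g x
  left_inv x := by simp [map_add, hg]
  right_inv x := by simp [map_sub, hg]
  map_add' x y := by simp [map_add]; abel

lemma step (p : ℕ) (ι : ℕ → Type*)
    (H : AddSubgroup (Π₀ k : ℕ, (ι k →₀ ZMod (p ^ k))))
    (hH : ∀ φ : (Π₀ k : ℕ, (ι k →₀ ZMod (p ^ k))) ≃+ (Π₀ k : ℕ, (ι k →₀ ZMod (p ^ k))),
      ∀ x ∈ H, φ x ∈ H)
    (k l : ℕ) (hkl : l ≠ k) (f₀ : ZMod (p ^ k) →+ ZMod (p ^ l)) (i : ι k) (j : ι l)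
    (x : Π₀ k : ℕ, (ι k →₀ ZMod (p ^ k))) (hx : x ∈ H) :
    Finsupp.single j (f₀ ((x k) i)) ∈ H.map (DFinsupp.evalAddMonoidHom l) := by
  classical
  set g : (Π₀ k : ℕ, (ι k →₀ ZMod (p ^ k))) →+ (Π₀ k : ℕ, (ι k →₀ ZMod (p ^ k))) :=
    (DFinsupp.singleAddHom (fun k => ι k →₀ ZMod (p ^ k)) l).comp
      ((Finsupp.singleAddHom j).comp (f₀.comp ((Finsupp.applyAddHom i).comp
        (DFinsupp.evalAddMonoidHom k)))) with hgdef
  have hgapp : ∀ y, g y = DFinsupp.single l (Finsupp.single j (f₀ ((y k) i))) := by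
    intro y
    simp [hgdef, DFinsupp.singleAddHom, DFinsupp.evalAddMonoidHom, DFinsupp.coeFnAddMonoidHom]
  have hg : ∀ y, g (g y) = 0 := by
    intro y
    rw [hgapp, hgapp, DFinsupp.single_eq_of_ne hkl.symm]
    simp
  have hgx : g x ∈ H := by
    have hα := hH (nilpEquiv (G := Π₀ k : ℕ, (ι k →₀ ZMod (p ^ k))) g hg) x hx
    have : g x = (nilpEquiv g hg) x - x := by simp [nilpEquiv]
    rw [this]
    exact H.sub_mem hα hx
  exact ⟨g x, hgx, by
    rw [hgapp]
    simp [DFinsupp.evalAddMonoidHom, DFinsupp.coeFnAddMonoidHom]⟩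

lemma extract (p : ℕ) (hp : p.Prime) (ι : ℕ → Type*)
    (H : AddSubgroup (Π₀ k : ℕ, (ι k →₀ ZMod (p ^ k)))) (m nm : ℕ)
    (hb : H.map (DFinsupp.evalAddMonoidHom m) ≠ ⊥)
    (he : H.map (DFinsupp.evalAddMonoidHom m) =
      AddSubgroup.map (zsmulHom ((p : ℤ) ^ nm)) ⊤) :
    ∃ _ : ι m, nm < m := by
  have hz : ∃ z ∈ H.map (DFinsupp.evalAddMonoidHom m), z ≠ 0 := by
    by_contra hc; push_neg at hc
    exact hb ((AddSubgroup.eq_bot_iff_forall _).2 hc)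
  obtain ⟨z, hz, hz0⟩ := hz
  rw [he] at hz
  obtain ⟨y, -, hy⟩ := hz
  obtain ⟨i, hi⟩ : ∃ i, z i ≠ 0 := by
    by_contra hc; push_neg at hc; exact hz0 (Finsupp.ext hc)
  refine ⟨i, ?_⟩
  by_contra hlt; push_neg at hlt
  apply hi
  rw [← hy]
  show ((p : ℤ) ^ nm • y) i = 0
  rw [Finsupp.smul_apply, zsmul_eq_mul]
  have : (((p : ℤ) ^ nm : ℤ) : ZMod (p ^ m)) = (p : ZMod (p ^ m)) ^ nm := by push_cast; ring
  rw [this, (aux_pow_eq_zero_iff p m nm hp).2 hlt, zero_mul]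



/-- Let `B = ⨁_{k≥1} B_k` with `B_k` a direct sum of cyclic groups of order
`p^k`, let `π_k` be the projections and `H` a characteristic subgroup with
`π_k(H) = p^{n_k} B_k` whenever `π_k(H) ≠ 0`. Then `n_k ≤ n_{k+r} ≤ n_k + r` for
all `k, r ≥ 1` (where both projections are nonzero). -/
theorem stmt12 (p : ℕ) (hp : p.Prime) (ι : ℕ → Type*)
    (H : AddSubgroup (Π₀ k : ℕ, (ι k →₀ ZMod (p ^ k))))
    (hH : ∀ φ : (Π₀ k : ℕ, (ι k →₀ ZMod (p ^ k))) ≃+ (Π₀ k : ℕ, (ι k →₀ ZMod (p ^ k))),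
      ∀ x ∈ H, φ x ∈ H)
    (n : ℕ → ℕ)
    (hn : ∀ k : ℕ, H.map (DFinsupp.evalAddMonoidHom k) ≠ ⊥ →
      H.map (DFinsupp.evalAddMonoidHom k) =
        AddSubgroup.map (zsmulHom ((p : ℤ) ^ n k)) ⊤) :
    ∀ k r : ℕ, 1 ≤ k → 1 ≤ r →
      H.map (DFinsupp.evalAddMonoidHom k) ≠ ⊥ →
      H.map (DFinsupp.evalAddMonoidHom (k + r)) ≠ ⊥ →
      n k ≤ n (k + r) ∧ n (k + r) ≤ n k + r := by
  intro k r hk hr hbk hbkr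
  classical
  have hk' := hn k hbk
  have hkr' := hn (k + r) hbkr
  obtain ⟨i₀, hnk⟩ := extract p hp ι H k (n k) hbk hk'
  obtain ⟨i₁, hnkr⟩ := extract p hp ι H (k + r) (n (k + r)) hbkr hkr'
  constructor
  · -- n k ≤ n (k + r)
    have mem : (zsmulHom ((p : ℤ) ^ n (k + r))) (Finsupp.single i₁ (1 : ZMod (p ^ (k + r)))) ∈
        H.map (DFinsupp.evalAddMonoidHom (k + r)) := by
      rw [hkr']; exact ⟨_, trivial, rfl⟩
    obtain ⟨x, hxH, hxk⟩ := mem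
    have hxk' : x (k + r) = (p : ℤ) ^ n (k + r) • Finsupp.single i₁ (1 : ZMod (p ^ (k + r))) := by
      simpa [DFinsupp.evalAddMonoidHom, DFinsupp.coeFnAddMonoidHom, zsmulHom] using hxk
    set f₁ : ZMod (p ^ (k + r)) →+ ZMod (p ^ k) :=
      (ZMod.castHom (pow_dvd_pow p (Nat.le_add_right k r)) (ZMod (p ^ k))).toAddMonoidHom
      with hf₁def
    have hstep := step p ι H hH (k + r) k (by omega) f₁ i₁ i₀ x hxH
    rw [hk'] at hstep
    obtain ⟨y, -, hy⟩ := hstep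
    have happ : (p : ZMod (p ^ k)) ^ n k * (y i₀) = (p : ZMod (p ^ k)) ^ n (k + r) := by
      have h1 := congrArg (fun z => z i₀) hy
      simp only [zsmulHom, AddMonoidHom.coe_mk, ZeroHom.coe_mk, Finsupp.smul_apply,
        Finsupp.single_eq_same] at h1
      rw [hxk'] at h1
      rw [Finsupp.smul_apply, Finsupp.single_eq_same, map_zsmul] at h1
      rw [zsmul_eq_mul, zsmul_eq_mul] at h1
      have hc1 : (((p : ℤ) ^ n k : ℤ) : ZMod (p ^ k)) = (p : ZMod (p ^ k)) ^ n k := by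
        push_cast; ring
      have hc2 : (((p : ℤ) ^ n (k + r) : ℤ) : ZMod (p ^ k)) =
          (p : ZMod (p ^ k)) ^ n (k + r) := by push_cast; ring
      rw [hc1, hc2] at h1
      rw [hf₁def] at h1
      simpa [ZMod.cast_one (pow_dvd_pow p (Nat.le_add_right k r))] using h1
    rcases lt_or_ge (n (k + r)) k with hlt | hle
    · exact aux_le_of_eq p k (n (k + r)) (n k) hp (y i₀) hlt happ.symm
    · omega
  · -- n (k + r) ≤ n k + r
    have mem : (zsmulHom ((p : ℤ) ^ n k)) (Finsupp.single i₀ (1 : ZMod (p ^ k))) ∈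
        H.map (DFinsupp.evalAddMonoidHom k) := by
      rw [hk']; exact ⟨_, trivial, rfl⟩
    obtain ⟨x, hxH, hxk⟩ := mem
    have hxk' : x k = (p : ℤ) ^ n k • Finsupp.single i₀ (1 : ZMod (p ^ k)) := by
      simpa [DFinsupp.evalAddMonoidHom, DFinsupp.coeFnAddMonoidHom, zsmulHom] using hxk
    have hf : ((zsmulHom ((p : ℤ) ^ r)).comp (Int.castAddHom (ZMod (p ^ (k + r)))))
        ((p ^ k : ℕ) : ℤ) = 0 := by
      simp only [AddMonoidHom.comp_apply, Int.coe_castAddHom, zsmulHom,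
        AddMonoidHom.coe_mk, ZeroHom.coe_mk, zsmul_eq_mul]
      push_cast
      rw [← pow_add]
      rw [add_comm r k, ← Nat.cast_pow, ZMod.natCast_self]
    set f₀ : ZMod (p ^ k) →+ ZMod (p ^ (k + r)) := ZMod.lift (p ^ k) ⟨_, hf⟩ with hf₀def
    have hf01 : f₀ (1 : ZMod (p ^ k)) = (p : ZMod (p ^ (k + r))) ^ r := by
      have h1 : (1 : ZMod (p ^ k)) = ((1 : ℤ) : ZMod (p ^ k)) := by push_cast; rfl
      rw [hf₀def, h1, ZMod.lift_coe]
      simp only [AddMonoidHom.comp_apply, Int.coe_castAddHom, zsmulHom,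
        AddMonoidHom.coe_mk, ZeroHom.coe_mk, zsmul_eq_mul]
      push_cast; ring
    have hstep := step p ι H hH k (k + r) (by omega) f₀ i₀ i₁ x hxH
    rw [hkr'] at hstep
    obtain ⟨y, -, hy⟩ := hstep
    have happ : (p : ZMod (p ^ (k + r))) ^ n (k + r) * (y i₁) =
        (p : ZMod (p ^ (k + r))) ^ (n k + r) := by
      have h1 := congrArg (fun z => z i₁) hy
      simp only [zsmulHom, AddMonoidHom.coe_mk, ZeroHom.coe_mk, Finsupp.smul_apply,
        Finsupp.single_eq_same] at h1
      rw [hxk'] at h1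
      rw [Finsupp.smul_apply, Finsupp.single_eq_same, map_zsmul, hf01] at h1
      rw [zsmul_eq_mul, zsmul_eq_mul] at h1
      have hc1 : (((p : ℤ) ^ n (k + r) : ℤ) : ZMod (p ^ (k + r))) =
          (p : ZMod (p ^ (k + r))) ^ n (k + r) := by push_cast; ring
      have hc2 : (((p : ℤ) ^ n k : ℤ) : ZMod (p ^ (k + r))) =
          (p : ZMod (p ^ (k + r))) ^ n k := by push_cast; ring
      rw [hc1, hc2] at h1
      rw [h1, ← pow_add]
    exact aux_le_of_eq p (k + r) (n k + r) (n (k + r)) hp (y i₁) (by omega) happ.symm
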